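/- Let E be a compact subset of a Hausdorff locally convex topological vector space such that the closed convex hull of E is compact. Then every extreme point of the closed convex hull of E belongs to E. -/

import Mathlib

/-- Extreme points of a set `E` in a real vector space, with the `t ∈ (0,1)` definition. -/
def extremePtsR {V : Type*} [AddCommGroup V] [Module ℝ V] (E : Set V) : Set V :=
  {v | v ∈ E ∧ ∀ x ∈ E, ∀ y ∈ E, ∀ t : ℝ, 0 < t → t < 1 →
    t • x + (1 - t) • y = v → x = v ∧ y = v}

open Set Filter Topology

section Aux

variable {V : Type*} [AddCommGroup V] [Module ℝ V] [TopologicalSpace V]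
    [IsTopologicalAddGroup V] [ContinuousSMul ℝ V]

lemma isCompact_convexJoin {s t : Set V} (hs : IsCompact s) (ht : IsCompact t) :
    IsCompact (convexJoin ℝ s t) := by
  have : convexJoin ℝ s t =
      (fun p : ℝ × V × V => (1 - p.1) • p.2.1 + p.1 • p.2.2) '' (Icc (0:ℝ) 1 ×ˢ s ×ˢ t) := by
    ext x
    simp only [mem_convexJoin, mem_image, mem_prod, Prod.exists]
    constructor
    · rintro ⟨a, ha, b, hb, hx⟩
      rw [segment_eq_image] at hx
      obtain ⟨θ, hθ, rfl⟩ := hx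
      exact ⟨θ, a, b, ⟨hθ, ha, hb⟩, rfl⟩
    · rintro ⟨θ, a, b, ⟨hθ, ha, hb⟩, rfl⟩
      exact ⟨a, ha, b, hb, segment_eq_image ℝ a b ▸ ⟨θ, hθ, rfl⟩⟩
  rw [this]
  exact ((isCompact_Icc.prod (hs.prod ht)).image (by fun_prop))

lemma isCompact_convexHull_biUnion {ι : Type*} (s : Finset ι) (A : ι → Set V)
    (hA : ∀ i ∈ s, IsCompact (A i) ∧ Convex ℝ (A i) ∧ (A i).Nonempty) :
    IsCompact (convexHull ℝ (⋃ i ∈ s, A i)) := by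
  classical
  induction s using Finset.induction with
  | empty => simp
  | @insert a s hnotmem ih =>
    have hAa := hA a (Finset.mem_insert_self a s)
    rcases s.eq_empty_or_nonempty with rfl | hsne
    · simpa [hAa.2.1.convexHull_eq] using hAa.1
    · have hUne : (⋃ i ∈ s, A i).Nonempty := by
        obtain ⟨j, hj⟩ := hsne
        obtain ⟨y, hy⟩ := (hA j (Finset.mem_insert_of_mem hj)).2.2
        exact ⟨y, mem_biUnion hj hy⟩
      have : (⋃ i ∈ insert a s, A i) = A a ∪ ⋃ i ∈ s, A i := by
        simp [Set.biUnion_insert]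
      rw [this, convexHull_union hAa.2.2 hUne, hAa.2.1.convexHull_eq]
      exact isCompact_convexJoin hAa.1
        (ih fun i hi => hA i (Finset.mem_insert_of_mem hi))

lemma extract_extreme {ι : Type*} (K : Set V) (hK : Convex ℝ K) (x : V)
    (hx : x ∈ extremePtsR K) (s : Finset ι) (A : ι → Set V)
    (hAK : ∀ i ∈ s, A i ⊆ K) (hA : ∀ i ∈ s, Convex ℝ (A i) ∧ (A i).Nonempty)
    (hmem : x ∈ convexHull ℝ (⋃ i ∈ s, A i)) : ∃ i ∈ s, x ∈ A i := by
  classical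
  induction s using Finset.induction with
  | empty => simp at hmem
  | @insert a s hnotmem ih =>
    have hAa := hA a (Finset.mem_insert_self a s)
    rcases s.eq_empty_or_nonempty with rfl | hsne
    · refine ⟨a, Finset.mem_insert_self a _, ?_⟩
      simpa [hAa.1.convexHull_eq] using hmem
    · have hUne : (⋃ i ∈ s, A i).Nonempty := by
        obtain ⟨j, hj⟩ := hsne
        obtain ⟨y, hy⟩ := (hA j (Finset.mem_insert_of_mem hj)).2
        exact ⟨y, mem_biUnion hj hy⟩
      have heq : (⋃ i ∈ insert a s, A i) = A a ∪ ⋃ i ∈ s, A i := by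
        simp [Set.biUnion_insert]
      rw [heq, convexHull_union hAa.2 hUne, hAa.1.convexHull_eq, mem_convexJoin] at hmem
      obtain ⟨p, hp, q, hq, u, v, hu, hv, huv, hcomb⟩ := hmem
      have hqK : q ∈ K := by
        refine convexHull_min ?_ hK hq
        exact Set.iUnion₂_subset fun i hi => hAK i (Finset.mem_insert_of_mem hi)
      have hpK : p ∈ K := hAK a (Finset.mem_insert_self a s) hp
      have ihrec : x ∈ convexHull ℝ (⋃ i ∈ s, A i) → ∃ i ∈ s, x ∈ A i :=
        ih (fun i hi => hAK i (Finset.mem_insert_of_mem hi))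
          (fun i hi => hA i (Finset.mem_insert_of_mem hi))
      rcases eq_or_lt_of_le hu with hu0 | hupos
      · -- u = 0, x = q
        have : x = q := by
          rw [← hcomb, ← hu0]; simp [show v = 1 by linarith]
        obtain ⟨i, hi, hxi⟩ := ihrec (this ▸ hq)
        exact ⟨i, Finset.mem_insert_of_mem hi, hxi⟩
      rcases eq_or_lt_of_le hv with hv0 | hvpos
      · -- v = 0, x = p
        have : x = p := by
          rw [← hcomb, ← hv0]; simp [show u = 1 by linarith]
        exact ⟨a, Finset.mem_insert_self a s, this ▸ hp⟩
      · have hu1 : u < 1 := by linarith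
        have hv' : v = 1 - u := by linarith
        have := hx.2 p hpK q hqK u hupos hu1 (by rw [← hv']; exact hcomb)
        exact ⟨a, Finset.mem_insert_self a s, this.1 ▸ hp⟩

end Aux

theorem milman_extremePoints_closedConvexHull_subset
    {V : Type*} [AddCommGroup V] [Module ℝ V] [TopologicalSpace V]
    [IsTopologicalAddGroup V] [ContinuousSMul ℝ V] [LocallyConvexSpace ℝ V] [T2Space V]
    (E : Set V) (hE : IsCompact E) (hconv : IsCompact (closure (convexHull ℝ E))) :
    extremePtsR (closure (convexHull ℝ E)) ⊆ E := by

  classical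
  intro x hx
  set K := closure (convexHull ℝ E) with hKdef
  have hKconv : Convex ℝ K := (convex_convexHull ℝ E).closure
  rw [← hE.isClosed.closure_eq]
  rw [mem_closure_iff_nhds]
  intro N hN
  -- U : nbhd of 0 such that x - u ∈ N for u ∈ U
  have hU : {u : V | x - u ∈ N} ∈ 𝓝 (0 : V) := by
    have hc : ContinuousAt (fun u : V => x - u) 0 := by fun_prop
    have : x - 0 = x := by simp
    exact hc.preimage_mem_nhds (by rwa [this])
  -- choose D : closed convex nbhd of 0 inside U
  obtain ⟨W, hWmem, hWclosed, hWU⟩ := exists_mem_nhds_isClosed_subset hU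
  obtain ⟨V', ⟨hV'mem, hV'conv⟩, hV'W⟩ :=
    (LocallyConvexSpace.convex_basis_zero ℝ V).mem_iff.1 hWmem
  set D := closure V' with hDdef
  have hDmem : D ∈ 𝓝 (0 : V) := mem_of_superset hV'mem subset_closure
  have hDconv : Convex ℝ D := hV'conv.closure
  have hDU : D ⊆ {u : V | x - u ∈ N} :=
    (hWclosed.closure_subset_iff.2 hV'W).trans hWU
  -- cover E by translates z + D
  have hnhds : ∀ z ∈ E, (fun d => z + d) '' D ∈ 𝓝 z := by
    intro z _
    have : (fun d => z + d) '' D ∈ Filter.map (fun d => z + d) (𝓝 (0 : V)) :=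
      Filter.image_mem_map hDmem
    rwa [show (fun d => z + d) = (Homeomorph.addLeft z : V → V) from rfl,
      (Homeomorph.addLeft z).map_nhds_eq 0,
      show (Homeomorph.addLeft z) 0 = z by simp] at this
  obtain ⟨t, htE, hcover⟩ := hE.elim_nhds_subcover (fun z => (fun d => z + d) '' D) hnhds
  set A : V → Set V := fun z => closure (convexHull ℝ (E ∩ (fun d => z + d) '' D)) with hAdef
  set t' : Finset V := t.filter (fun z => (E ∩ (fun d => z + d) '' D).Nonempty) with ht'def
  have hAsubK : ∀ z, A z ⊆ K :=
    fun z => closure_mono (convexHull_mono inter_subset_left)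
  have hAconv : ∀ z, Convex ℝ (A z) := fun z => (convex_convexHull ℝ _).closure
  have hAcompact : ∀ z, IsCompact (A z) :=
    fun z => hconv.of_isClosed_subset isClosed_closure (hAsubK z)
  have hAne : ∀ z ∈ t', (A z).Nonempty := by
    intro z hz
    have := (Finset.mem_filter.1 hz).2
    exact this.convexHull.closure
  have hEsub : E ⊆ ⋃ z ∈ t', A z := by
    intro e he
    obtain ⟨z, hz, hez⟩ := Set.mem_iUnion₂.1 (hcover he)
    have hz' : z ∈ t' := Finset.mem_filter.2 ⟨hz, ⟨e, he, hez⟩⟩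
    exact Set.mem_biUnion hz' (subset_closure (subset_convexHull ℝ _ ⟨he, hez⟩))
  have hC : IsCompact (convexHull ℝ (⋃ z ∈ t', A z)) :=
    isCompact_convexHull_biUnion t' A
      (fun z hz => ⟨hAcompact z, hAconv z, hAne z hz⟩)
  have hKC : K ⊆ convexHull ℝ (⋃ z ∈ t', A z) :=
    closure_minimal ((convexHull_mono hEsub).trans
      (convexHull_min (subset_convexHull ℝ _) (convex_convexHull ℝ _))) hC.isClosed
  obtain ⟨z, hzt', hxz⟩ := extract_extreme K hKconv x hx t' A
    (fun z _ => hAsubK z) (fun z hz => ⟨hAconv z, hAne z hz⟩) (hKC hx.1)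
  have hzE : z ∈ E := htE z (Finset.mem_filter.1 hzt').1
  have himg : IsClosed ((fun d => z + d) '' D) := by
    rw [show (fun d => z + d) = (Homeomorph.addLeft z : V → V) from rfl,
      (Homeomorph.addLeft z).isClosed_image]
    exact isClosed_closure
  have hconvimg : Convex ℝ ((fun d => z + d) '' D) := by
    simpa using hDconv.translate z
  have hxD : x ∈ (fun d => z + d) '' D := by
    have : A z ⊆ (fun d => z + d) '' D := by
      rw [hAdef]
      calc closure (convexHull ℝ (E ∩ (fun d => z + d) '' D))
          ⊆ closure ((fun d => z + d) '' D) :=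
            closure_mono (convexHull_min inter_subset_right hconvimg)
        _ = (fun d => z + d) '' D := himg.closure_eq
    exact this hxz
  obtain ⟨d, hd, hxd⟩ := hxD
  have : x - d ∈ N := hDU hd
  have hzN : z ∈ N := by
    have : z = x - d := by rw [← hxd]; module
    rw [this]; exact hDU hd
  exact ⟨z, hzN, hzE⟩
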